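/- arXiv:math/0603554 — 6 statements merged into one kernel-verified Lean document; each statement's English description precedes it below -/
import Mathlib

section
/- For every positive integer n, the number of positive divisors of n satisfies d(n) ≤ √3 · n^{1/2}. -/
private lemma aux2 (a : ℕ) : 4 * (a + 1) ^ 2 ≤ 9 * 2 ^ a := by
  induction a with
  | zero => norm_num
  | succ a ih =>
    match a, ih with
    | 0, _ => norm_num
    | 1, _ => norm_num
    | (a + 2), ih =>
      have h : (9 : ℕ) * 2 ^ (a + 3) = 2 * (9 * 2 ^ (a + 2)) := by ring
      have key : 4 * (a + 2 + 1 + 1) ^ 2 ≤ 2 * (4 * (a + 2 + 1) ^ 2) := by ring_nf; omega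
      omega

private lemma aux3 (b : ℕ) : 3 * (b + 1) ^ 2 ≤ 4 * 3 ^ b := by
  induction b with
  | zero => norm_num
  | succ b ih =>
    match b, ih with
    | 0, _ => norm_num
    | (b + 1), ih =>
      have h : (4 : ℕ) * 3 ^ (b + 2) = 3 * (4 * 3 ^ (b + 1)) := by ring
      have key : 3 * (b + 1 + 1 + 1) ^ 2 ≤ 3 * (3 * (b + 1 + 1) ^ 2) := by ring_nf; omega
      omega

private lemma aux5 {p : ℕ} (hp : 5 ≤ p) (k : ℕ) : (k + 1) ^ 2 ≤ p ^ k := by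
  induction k with
  | zero => norm_num
  | succ k ih =>
    have key : (k + 1 + 1) ^ 2 ≤ 5 * (k + 1) ^ 2 := by ring_nf; omega
    calc (k + 1 + 1) ^ 2 ≤ 5 * (k + 1) ^ 2 := key
      _ ≤ p * p ^ k := Nat.mul_le_mul hp ih
      _ = p ^ (k + 1) := (pow_succ' p k).symm

private lemma d_prime_pow {p : ℕ} (hp : p.Prime) (k : ℕ) :
    (p ^ k).divisors.card = k + 1 := by
  rw [Nat.divisors_prime_pow hp, Finset.card_map, Finset.card_range]

private lemma d_sq_coprime_six {m : ℕ} (hm : m ≠ 0) (h2 : ¬ (2 ∣ m)) (h3 : ¬ (3 ∣ m)) :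
    m.divisors.card ^ 2 ≤ m := by
  rw [Nat.card_divisors hm]
  conv_rhs => rw [← Nat.factorization_prod_pow_eq_self hm]
  rw [← Finset.prod_pow]
  rw [Nat.factorization_prod_pow_eq_self hm]  -- undo; we handle below
  conv_rhs => rw [← Nat.factorization_prod_pow_eq_self hm]
  rw [Nat.prod_factorization_eq_prod_primeFactors]
  apply Finset.prod_le_prod'
  intro p hps
  have hp := Nat.prime_of_mem_primeFactors hps
  have hpd : p ∣ m := Nat.dvd_of_mem_primeFactors hps
  have hp5 : 5 ≤ p := hp.five_le_of_ne_two_of_ne_three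
    (by rintro rfl; exact h2 hpd) (by rintro rfl; exact h3 hpd)
  exact aux5 hp5 _

private lemma d_sq_le (n : ℕ) (hn : n ≠ 0) : n.divisors.card ^ 2 ≤ 3 * n := by
  set a := n.factorization 2 with ha
  set n2 := ordCompl[2] n with hn2
  set b := n2.factorization 3 with hb
  set m := ordCompl[3] n2 with hm
  have hn2ne : n2 ≠ 0 := (Nat.ordCompl_pos 2 hn).ne'
  have hmne : m ≠ 0 := (Nat.ordCompl_pos 3 hn2ne).ne'
  have e1 : 2 ^ a * n2 = n := Nat.ordProj_mul_ordCompl_eq_self n 2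
  have e2 : 3 ^ b * m = n2 := Nat.ordProj_mul_ordCompl_eq_self n2 3
  have hm2 : ¬ (2 ∣ m) := by
    intro h
    exact Nat.not_dvd_ordCompl Nat.prime_two hn (h.trans (Nat.ordCompl_dvd n2 3))
  have hm3 : ¬ (3 ∣ m) := Nat.not_dvd_ordCompl Nat.prime_three hn2ne
  have c1 : (2 ^ a).Coprime n2 :=
    Nat.Coprime.pow_left a (Nat.coprime_ordCompl Nat.prime_two hn)
  have c2 : (3 ^ b).Coprime m :=
    Nat.Coprime.pow_left b (Nat.coprime_ordCompl Nat.prime_three hn2ne)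
  have hd : n.divisors.card = (a + 1) * ((b + 1) * m.divisors.card) := by
    rw [← e1, c1.card_divisors_mul, d_prime_pow Nat.prime_two, ← e2,
      c2.card_divisors_mul, d_prime_pow Nat.prime_three]
  have key : 12 * n.divisors.card ^ 2 ≤ 36 * n := by
    have : 12 * n.divisors.card ^ 2
        = (4 * (a + 1) ^ 2) * ((3 * (b + 1) ^ 2) * m.divisors.card ^ 2) := by
      rw [hd]; ring
    rw [this]
    calc (4 * (a + 1) ^ 2) * ((3 * (b + 1) ^ 2) * m.divisors.card ^ 2)
        ≤ (9 * 2 ^ a) * ((4 * 3 ^ b) * m) := by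
          exact Nat.mul_le_mul (aux2 a)
            (Nat.mul_le_mul (aux3 b) (d_sq_coprime_six hmne hm2 hm3))
      _ = 36 * (2 ^ a * (3 ^ b * m)) := by ring
      _ = 36 * n := by rw [e2, e1]
  omega

/-- For every positive integer `n`, the number of positive divisors of `n`
satisfies `d(n) ≤ √3 · n^(1/2)`. -/
theorem stmt7 (n : ℕ) (hn : 0 < n) :
    (n.divisors.card : ℝ) ≤ Real.sqrt 3 * (n : ℝ) ^ ((1 : ℝ) / 2) := by
  have h := d_sq_le n hn.ne'
  have hR : ((n.divisors.card : ℝ)) ^ 2 ≤ 3 * n := by exact_mod_cast h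
  rw [← Real.sqrt_eq_rpow, ← Real.sqrt_mul (by norm_num : (0:ℝ) ≤ 3)]
  exact Real.le_sqrt_of_sq_le hR
end

section
/- For every positive integer n, the number of positive divisors of n satisfies d(n) ≤ (1536/35)^{1/3} · n^{1/3}. -/
/-!
Writing `n = ∏ p ^ kₚ`, the ratio `d(n)³ / n` is the product over `p ∣ n` of `(kₚ + 1)³ / p ^ kₚ`.
Each factor is at most `max_k (k + 1)³ / p ^ k`, which equals `8, 3, 8/5, 8/7` for `p = 2, 3, 5, 7`
(attained at `k = 3, 2, 1, 1`) and `1` for `p ≥ 11`, since then `(k + 1)³ ≤ 8 ^ k ≤ p ^ k`.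
The product of these maxima is `1536/35`.
-/

open Finset

namespace Nat

/-- The ratio `((k + 2) / (k + 1)) ^ s` decreases in `k`. -/
lemma add_two_pow_le_mul_add_one_pow {s p k₀ k : ℕ} (hstep : (k₀ + 2) ^ s ≤ p * (k₀ + 1) ^ s)
    (hk : k₀ ≤ k) : (k + 2) ^ s ≤ p * (k + 1) ^ s := by
  have hratio : (k + 2) * (k₀ + 1) ≤ (k₀ + 2) * (k + 1) := by nlinarith
  refine Nat.le_of_mul_le_mul_right (c := (k₀ + 1) ^ s) ?_ (by positivity)
  calc (k + 2) ^ s * (k₀ + 1) ^ s ≤ (k₀ + 2) ^ s * (k + 1) ^ s := by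
        rw [← mul_pow, ← mul_pow]; exact Nat.pow_le_pow_left hratio s
    _ ≤ p * (k₀ + 1) ^ s * (k + 1) ^ s := Nat.mul_le_mul_right _ hstep
    _ = p * (k + 1) ^ s * (k₀ + 1) ^ s := by ring

lemma add_one_pow_le_mul_pow {s p k₀ : ℕ} {C : ℝ} (hstep : (k₀ + 2) ^ s ≤ p * (k₀ + 1) ^ s)
    (hbase : ∀ k ≤ k₀, ((k : ℝ) + 1) ^ s ≤ C * p ^ k) (k : ℕ) :
    ((k : ℝ) + 1) ^ s ≤ C * p ^ k := by
  induction k with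
  | zero => exact hbase 0 k₀.zero_le
  | succ k ih =>
    rcases le_or_gt (k + 1) k₀ with hk | hk
    · exact hbase _ hk
    have hnat := add_two_pow_le_mul_add_one_pow hstep (Nat.lt_succ_iff.mp hk)
    calc ((↑(k + 1) : ℝ) + 1) ^ s = ((k + 2) ^ s : ℕ) := by push_cast; ring
      _ ≤ ((p * (k + 1) ^ s : ℕ) : ℝ) := by exact_mod_cast hnat
      _ = p * ((k : ℝ) + 1) ^ s := by push_cast; ring
      _ ≤ p * (C * p ^ k) := mul_le_mul_of_nonneg_left ih (by positivity)
      _ = C * p ^ (k + 1) := by ring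

theorem card_divisors_pow_le_prod_mul {s : ℕ} {w : ℕ → ℝ}
    (hw : ∀ p, p.Prime → ∀ k : ℕ, ((k : ℝ) + 1) ^ s ≤ w p * p ^ k) {n : ℕ} (hn : n ≠ 0) :
    (#n.divisors : ℝ) ^ s ≤ (∏ p ∈ n.primeFactors, w p) * n := by
  calc (#n.divisors : ℝ) ^ s = ∏ p ∈ n.primeFactors, ((n.factorization p : ℝ) + 1) ^ s := by
        rw [card_divisors hn]; push_cast; exact (prod_pow ..).symm
    _ ≤ ∏ p ∈ n.primeFactors, w p * p ^ n.factorization p :=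
        prod_le_prod (fun _ _ ↦ by positivity) fun p hp ↦ hw p (prime_of_mem_primeFactors hp) _
    _ = (∏ p ∈ n.primeFactors, w p) * n := by
        rw [prod_mul_distrib]
        exact_mod_cast congrArg (_ * ((·) : ℕ → ℝ) ·) (prod_primeFactors_pow_factorization hn).symm

/-- `divisorCubeWeight p = max_k (k + 1)³ / p ^ k` for every prime `p`. -/
noncomputable def divisorCubeWeight (p : ℕ) : ℝ :=
  if p = 2 then 8 else if p = 3 then 3 else if p = 5 then 8 / 5 else if p = 7 then 8 / 7 else 1

lemma one_le_divisorCubeWeight (p : ℕ) : 1 ≤ divisorCubeWeight p := by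
  unfold divisorCubeWeight; split_ifs <;> norm_num

lemma eight_le_of_prime_of_ne {p : ℕ} (hp : p.Prime) (h2 : p ≠ 2) (h3 : p ≠ 3) (h5 : p ≠ 5)
    (h7 : p ≠ 7) : 8 ≤ p := by
  by_contra! hlt
  interval_cases p <;> norm_num at *

lemma add_one_pow_three_le_divisorCubeWeight_mul_pow {p : ℕ} (hp : p.Prime) (k : ℕ) :
    ((k : ℝ) + 1) ^ 3 ≤ divisorCubeWeight p * p ^ k := by
  unfold divisorCubeWeight
  split_ifs with h2 h3 h5 h7
  · subst h2
    refine add_one_pow_le_mul_pow (k₀ := 3) (by norm_num) (fun j hj ↦ ?_) k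
    interval_cases j <;> norm_num
  · subst h3
    refine add_one_pow_le_mul_pow (k₀ := 2) (by norm_num) (fun j hj ↦ ?_) k
    interval_cases j <;> norm_num
  · subst h5
    refine add_one_pow_le_mul_pow (k₀ := 1) (by norm_num) (fun j hj ↦ ?_) k
    interval_cases j <;> norm_num
  · subst h7
    refine add_one_pow_le_mul_pow (k₀ := 1) (by norm_num) (fun j hj ↦ ?_) k
    interval_cases j <;> norm_num
  · have h8 := eight_le_of_prime_of_ne hp h2 h3 h5 h7
    refine add_one_pow_le_mul_pow (k₀ := 0) (by simpa using h8) (fun j hj ↦ ?_) k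
    interval_cases j; norm_num

lemma prod_divisorCubeWeight_le (s : Finset ℕ) : ∏ p ∈ s, divisorCubeWeight p ≤ 1536 / 35 := by
  let T : Finset ℕ := {2, 3, 5, 7}
  have hweight_eq_one : ∀ p ∉ T, divisorCubeWeight p = 1 := fun p hp ↦ by
    simp only [T, mem_insert, mem_singleton, not_or] at hp
    simp [divisorCubeWeight, hp]
  calc ∏ p ∈ s, divisorCubeWeight p = ∏ p ∈ s ∩ T, divisorCubeWeight p :=
        (prod_subset inter_subset_left fun p _ hp ↦
          hweight_eq_one p fun hpT ↦ hp (mem_inter.mpr ⟨‹_›, hpT⟩)).symm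
    _ ≤ ∏ p ∈ T, divisorCubeWeight p :=
        prod_le_prod_of_subset_of_one_le inter_subset_right
          (fun p _ ↦ zero_le_one.trans (one_le_divisorCubeWeight p))
          fun p _ _ ↦ one_le_divisorCubeWeight p
    _ = 1536 / 35 := by norm_num [T, divisorCubeWeight]

end Nat

/-- For every positive integer `n`, the number of positive divisors of `n`
satisfies `d(n) ≤ (1536/35)^(1/3) · n^(1/3)`. -/
theorem stmt8 (n : ℕ) (hn : 0 < n) :
    (n.divisors.card : ℝ) ≤ (1536 / 35 : ℝ) ^ ((1 : ℝ) / 3) * (n : ℝ) ^ ((1 : ℝ) / 3) := by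
  have hcube : (#n.divisors : ℝ) ^ 3 ≤ 1536 / 35 * n :=
    (Nat.card_divisors_pow_le_prod_mul
      (fun _ hp ↦ Nat.add_one_pow_three_le_divisorCubeWeight_mul_pow hp) hn.ne').trans
      (mul_le_mul_of_nonneg_right (Nat.prod_divisorCubeWeight_le _) n.cast_nonneg)
  rw [← Real.mul_rpow (by norm_num) n.cast_nonneg, one_div,
    Real.le_rpow_inv_iff_of_pos (by positivity) (by positivity) (by norm_num)]
  exact_mod_cast hcube
end

section
/- If n is an odd positive integer, then the number of positive divisors of n satisfies d(n) ≤ 4·(3/35)^{1/3} · n^{1/3}; in particular d(n) < 1.764 · n^{1/3}. -/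
/-!
Write `n = 3^a 5^b 7^c m`, where every prime factor of `m` is at least `11`. Since `d` is
multiplicative, `d(n)^3 / n` is the product of the factors `(a+1)^3 / 3^a ≤ 3`,
`(b+1)^3 / 5^b ≤ 8/5`, `(c+1)^3 / 7^c ≤ 8/7` and `d(m)^3 / m ≤ 1` (as `(k+1)^3 ≤ 8^k ≤ p^k`
for every prime power `p^k` dividing `m`),
so `d(n)^3 ≤ (192/35) n = 64 (3/35) n`; taking cube roots gives the bound.
-/

open Finset

lemma add_two_pow_three_le_three_mul {k : ℕ} (hk : 2 ≤ k) : (k + 2) ^ 3 ≤ 3 * (k + 1) ^ 3 := by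
  nlinarith [Nat.mul_le_mul hk hk]

/-- Once `k ≥ 2` the ratio `(k+2)^3 / (k+1)^3` is at most `64/27 < 3 ≤ p`, so the cases
`k ≤ 2` suffice. -/
lemma mul_add_one_pow_three_le {a b p : ℕ} (hp : 3 ≤ p) (h₀ : a ≤ b) (h₁ : 8 * a ≤ b * p)
    (h₂ : 27 * a ≤ b * p ^ 2) (k : ℕ) : a * (k + 1) ^ 3 ≤ b * p ^ k := by
  induction k with
  | zero => simpa using h₀
  | succ k ih =>
    rcases Nat.lt_or_ge k 2 with hk | hk
    · interval_cases k <;> norm_num <;> linarith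
    · calc a * (k + 1 + 1) ^ 3 ≤ a * (3 * (k + 1) ^ 3) :=
            Nat.mul_le_mul_left a (add_two_pow_three_le_three_mul hk)
        _ = 3 * (a * (k + 1) ^ 3) := by ring
        _ ≤ p * (b * p ^ k) := Nat.mul_le_mul hp ih
        _ = b * p ^ (k + 1) := by ring

lemma card_divisors_prime_pow {p : ℕ} (hp : p.Prime) (k : ℕ) : #(p ^ k).divisors = k + 1 := by
  rw [Nat.divisors_prime_pow hp, card_map, card_range]

lemma primeFactors_ordCompl (n p : ℕ) : (ordCompl[p] n).primeFactors = n.primeFactors.erase p := by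
  rw [← Nat.support_factorization, Nat.factorization_ordCompl, Finsupp.support_erase,
    Nat.support_factorization]

lemma card_divisors_pow_le_self {m q r : ℕ} (hm : m ≠ 0) (hq : ∀ p ∈ m.primeFactors, q ≤ p)
    (hpow : ∀ k, (k + 1) ^ r ≤ q ^ k) : #m.divisors ^ r ≤ m := by
  rw [Nat.card_divisors hm, ← prod_pow]
  conv_rhs => rw [← Nat.prod_factorization_pow_eq_self hm, Finsupp.prod, Nat.support_factorization]
  exact prod_le_prod' fun p hp => (hpow _).trans (Nat.pow_le_pow_left (hq p hp) _)

lemma mul_card_divisors_pow_le_of_ordCompl {n p r a b c e : ℕ} (hp : p.Prime) (hn : n ≠ 0)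
    (hpow : ∀ k, a * (k + 1) ^ r ≤ b * p ^ k)
    (hcompl : c * #(ordCompl[p] n).divisors ^ r ≤ e * ordCompl[p] n) :
    a * c * #n.divisors ^ r ≤ b * e * n := by
  set k := n.factorization p
  set m := ordCompl[p] n
  have hn_eq : p ^ k * m = n := Nat.ordProj_mul_ordCompl_eq_self n p
  have hcard : #n.divisors = (k + 1) * #m.divisors := by
    rw [← hn_eq, ((Nat.coprime_ordCompl hp hn).pow_left k).card_divisors_mul,
      card_divisors_prime_pow hp]
  calc a * c * #n.divisors ^ r = (a * (k + 1) ^ r) * (c * #m.divisors ^ r) := by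
        rw [hcard, mul_pow]; ring
    _ ≤ (b * p ^ k) * (e * m) := Nat.mul_le_mul (hpow k) hcompl
    _ = b * e * n := by rw [← hn_eq]; ring

lemma Nat.Prime.eight_le_of_ne {p : ℕ} (hp : p.Prime) (h2 : p ≠ 2) (h3 : p ≠ 3) (h5 : p ≠ 5)
    (h7 : p ≠ 7) : 8 ≤ p := by
  by_contra! hlt
  interval_cases p <;> norm_num at *

theorem Odd.mul_card_divisors_pow_three_le {n : ℕ} (hodd : Odd n) :
    35 * #n.divisors ^ 3 ≤ 192 * n := by
  have hn : n ≠ 0 := hodd.pos.ne'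
  set m₁ := ordCompl[3] n
  set m₂ := ordCompl[5] m₁
  set m₃ := ordCompl[7] m₂
  have hm₁ : m₁ ≠ 0 := (Nat.ordCompl_pos 3 hn).ne'
  have hm₂ : m₂ ≠ 0 := (Nat.ordCompl_pos 5 hm₁).ne'
  have hm₃ : m₃ ≠ 0 := (Nat.ordCompl_pos 7 hm₂).ne'
  have hlarge : ∀ p ∈ m₃.primeFactors, 8 ≤ p := by
    intro p hp
    simp only [m₃, m₂, m₁, primeFactors_ordCompl, mem_erase, Nat.mem_primeFactors] at hp
    obtain ⟨h7, h5, h3, hp, hpn, -⟩ := hp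
    have h2 : p ≠ 2 := by
      rintro rfl
      exact Nat.not_even_iff_odd.mpr hodd (even_iff_two_dvd.mpr hpn)
    exact hp.eight_le_of_ne h2 h3 h5 h7
  have h₃ : 1 * #m₃.divisors ^ 3 ≤ 1 * m₃ := by
    simpa using card_divisors_pow_le_self hm₃ hlarge fun k => by
      simpa using mul_add_one_pow_three_le (a := 1) (b := 1) (p := 8) (by norm_num) le_rfl
        (by norm_num) (by norm_num) k
  have h₂ : 7 * 1 * #m₂.divisors ^ 3 ≤ 8 * 1 * m₂ :=
    mul_card_divisors_pow_le_of_ordCompl Nat.prime_seven hm₂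
      (mul_add_one_pow_three_le (by norm_num) (by norm_num) (by norm_num) (by norm_num)) h₃
  have h₁ : 5 * (7 * 1) * #m₁.divisors ^ 3 ≤ 8 * (8 * 1) * m₁ :=
    mul_card_divisors_pow_le_of_ordCompl Nat.prime_five hm₁
      (mul_add_one_pow_three_le (by norm_num) (by norm_num) (by norm_num) (by norm_num)) h₂
  have h₀ : 1 * (5 * (7 * 1)) * #n.divisors ^ 3 ≤ 3 * (8 * (8 * 1)) * n :=
    mul_card_divisors_pow_le_of_ordCompl Nat.prime_three hn
      (mul_add_one_pow_three_le (a := 1) (b := 3) le_rfl (by norm_num) (by norm_num) (by norm_num))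
      h₁
  simpa using h₀

theorem stmt9_general (n : ℕ) (hodd : Odd n) :
    (n.divisors.card : ℝ) ≤ 4 * (3 / 35 : ℝ) ^ ((1 : ℝ) / 3) * (n : ℝ) ^ ((1 : ℝ) / 3) ∧
    (n.divisors.card : ℝ) < 1.764 * (n : ℝ) ^ ((1 : ℝ) / 3) := by
  have hcube : (n.divisors.card : ℝ) ^ 3 ≤ 64 * (3 / 35) * n := by
    have h : ((35 * #n.divisors ^ 3 : ℕ) : ℝ) ≤ (192 * n : ℕ) :=
      mod_cast hodd.mul_card_divisors_pow_three_le
    push_cast at h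
    linarith
  have h64 : (64 : ℝ) ^ (3 : ℝ)⁻¹ = 4 := by
    rw [show (64 : ℝ) = 4 ^ (3 : ℝ) by norm_num, ← Real.rpow_mul (by norm_num)]
    norm_num
  have hbound : (n.divisors.card : ℝ) ≤ 4 * (3 / 35 : ℝ) ^ ((1 : ℝ) / 3) * n ^ ((1 : ℝ) / 3) := by
    rw [one_div, ← h64, ← Real.mul_rpow (by norm_num) (by norm_num),
      ← Real.mul_rpow (by norm_num) (by positivity),
      Real.le_rpow_inv_iff_of_pos (by positivity) (by positivity) (by norm_num),
      Real.rpow_ofNat]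
    exact hcube
  have hconst : 4 * (3 / 35 : ℝ) ^ ((1 : ℝ) / 3) < 1.764 := by
    have : (3 / 35 : ℝ) ^ (3 : ℝ)⁻¹ < 0.441 := by
      rw [Real.rpow_inv_lt_iff_of_pos (by norm_num) (by norm_num) (by norm_num)]
      norm_num
    rw [one_div]
    linarith
  have hn : (0 : ℝ) < n ^ ((1 : ℝ) / 3) := by have := hodd.pos; positivity
  exact ⟨hbound, hbound.trans_lt (mul_lt_mul_of_pos_right hconst hn)⟩

/-- If `n` is an odd positive integer then `d(n) ≤ 4 (3/35)^(1/3) n^(1/3)`;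
in particular `d(n) < 1.764 n^(1/3)`. -/
theorem stmt9 (n : ℕ) (hn : 0 < n) (hodd : Odd n) :
    (n.divisors.card : ℝ) ≤ 4 * (3 / 35 : ℝ) ^ ((1 : ℝ) / 3) * (n : ℝ) ^ ((1 : ℝ) / 3) ∧
    (n.divisors.card : ℝ) < 1.764 * (n : ℝ) ^ ((1 : ℝ) / 3) :=
  stmt9_general n hodd
end

section
/- Let c₀ = (768/35)^{1/3}. For every positive integer n, either d(n) ≤ c₀ · n^{1/3}, or n = 2^a · 3^b · 5^c · 7^e · m where 1 ≤ a ≤ 6, 0 ≤ b ≤ 4, 0 ≤ c ≤ 2, 0 ≤ e ≤ 1, and m ∈ {1, 11, 13}. In particular, if n > 11,793,600 then d(n) ≤ c₀ · n^{1/3}. -/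
section Aux12

private lemma nsteps12 (p k lo : ℕ) (hk : lo ≤ k)
    (hcase : lo = 3 ∧ p = 2 ∨ lo = 2 ∧ p = 3 ∨ lo = 1 ∧ 5 ≤ p ∨ lo = 2 ∧ 5 ≤ p) :
    (k+2)^3 ≤ p * (k+1)^3 := by
  obtain ⟨m, rfl⟩ := Nat.exists_eq_add_of_le hk
  rcases hcase with ⟨rfl, rfl⟩ | ⟨rfl, rfl⟩ | ⟨rfl, hp5⟩ | ⟨rfl, hp5⟩
  · nlinarith [Nat.zero_le (m^3), Nat.zero_le (m^2), Nat.zero_le m]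
  · nlinarith [Nat.zero_le (m^3), Nat.zero_le (m^2), Nat.zero_le m]
  · calc (1+m+2)^3 ≤ 5 * (1+m+1)^3 := by nlinarith [Nat.zero_le (m^3), Nat.zero_le (m^2), Nat.zero_le m]
      _ ≤ p * (1+m+1)^3 := Nat.mul_le_mul_right _ hp5
  · calc (2+m+2)^3 ≤ 5 * (2+m+1)^3 := by nlinarith [Nat.zero_le (m^3), Nat.zero_le (m^2), Nat.zero_le m]
      _ ≤ p * (2+m+1)^3 := Nat.mul_le_mul_right _ hp5

private lemma Igen12 (A B p lo : ℕ) (hbase : A*(lo+1)^3 ≤ B*p^lo)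
    (hstep : ∀ k, lo ≤ k → (k+2)^3 ≤ p*(k+1)^3) :
    ∀ k, lo ≤ k → A*(k+1)^3 ≤ B*p^k := by
  intro k hk
  induction k, hk using Nat.le_induction with
  | base => exact hbase
  | succ k hk ih =>
    calc A*(k+1+1)^3 ≤ A*(p*(k+1)^3) := Nat.mul_le_mul_left _ (hstep k hk)
      _ = p*(A*(k+1)^3) := by ring
      _ ≤ p*(B*p^k) := Nat.mul_le_mul_left _ ih
      _ = B*p^(k+1) := by ring

private lemma J2 : ∀ k : ℕ, (k+1)^3 ≤ 8*2^k := by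
  intro k
  rcases Nat.lt_or_ge k 3 with h | h
  · interval_cases k <;> norm_num
  · simpa using Igen12 1 8 2 3 (by norm_num) (fun k hk => nsteps12 2 k 3 hk (by norm_num)) k h

private lemma J2b : ∀ k : ℕ, 7 ≤ k → (k+1)^3 ≤ 4*2^k := by
  intro k h
  simpa using Igen12 1 4 2 7 (by norm_num) (fun k hk => nsteps12 2 k 3 (by omega) (by norm_num)) k h

private lemma J3 : ∀ k : ℕ, (k+1)^3 ≤ 3*3^k := by
  intro k
  rcases Nat.lt_or_ge k 2 with h | h
  · interval_cases k <;> norm_num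
  · simpa using Igen12 1 3 3 2 (by norm_num) (fun k hk => nsteps12 3 k 2 hk (by norm_num)) k h

private lemma J3b : ∀ k : ℕ, 5 ≤ k → 2*(k+1)^3 ≤ 3*3^k := by
  intro k h
  exact Igen12 2 3 3 5 (by norm_num) (fun k hk => nsteps12 3 k 2 (by omega) (by norm_num)) k h

private lemma J5 : ∀ k : ℕ, 5*(k+1)^3 ≤ 8*5^k := by
  intro k
  rcases Nat.lt_or_ge k 1 with h | h
  · interval_cases k <;> norm_num
  · exact Igen12 5 8 5 1 (by norm_num) (fun k hk => nsteps12 5 k 1 hk (by norm_num)) k h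

private lemma J5b : ∀ k : ℕ, 3 ≤ k → 5*(k+1)^3 ≤ 4*5^k := by
  intro k h
  exact Igen12 5 4 5 3 (by norm_num) (fun k hk => nsteps12 5 k 1 (by omega) (by norm_num)) k h

private lemma J7 : ∀ k : ℕ, 7*(k+1)^3 ≤ 8*7^k := by
  intro k
  rcases Nat.lt_or_ge k 1 with h | h
  · interval_cases k <;> norm_num
  · exact Igen12 7 8 7 1 (by norm_num) (fun k hk => nsteps12 7 k 1 hk (by norm_num)) k h

private lemma J7b : ∀ k : ℕ, 2 ≤ k → 7*(k+1)^3 ≤ 4*7^k := by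
  intro k h
  exact Igen12 7 4 7 2 (by norm_num) (fun k hk => nsteps12 7 k 1 (by omega) (by norm_num)) k h

private lemma Jp1 : ∀ p : ℕ, 11 ≤ p → ∀ k : ℕ, 1 ≤ k → (k+1)^3 ≤ p^k := by
  intro p hp k hk
  simpa using Igen12 1 1 p 1 (by simpa using hp.trans' (by norm_num))
    (fun k hk => nsteps12 p k 1 hk (by omega)) k hk

private lemma Jp2 : ∀ p : ℕ, 11 ≤ p → ∀ k : ℕ, 2 ≤ k → 2*(k+1)^3 ≤ p^k := by
  intro p hp k hk
  have hbase : 2*(2+1)^3 ≤ 1*p^2 := by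
    have : 11^2 ≤ p^2 := Nat.pow_le_pow_left hp 2
    simpa using this.trans' (by norm_num)
  simpa using Igen12 2 1 p 2 hbase (fun k hk => nsteps12 p k 2 hk (by omega)) k hk

private lemma Jp17 : ∀ p : ℕ, 17 ≤ p → ∀ k : ℕ, 1 ≤ k → 2*(k+1)^3 ≤ p^k := by
  intro p hp k hk
  have hbase : 2*(1+1)^3 ≤ 1*p^1 := by simpa using hp.trans' (by norm_num)
  simpa using Igen12 2 1 p 1 hbase (fun k hk => nsteps12 p k 1 hk (by omega)) k hk

private lemma card_div_pp12 {p k : ℕ} (pp : p.Prime) : (p^k).divisors.card = k + 1 := by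
  rw [Nat.divisors_prime_pow pp, Finset.card_map, Finset.card_range]

private lemma peel12 (p : ℕ) (pp : p.Prime) (n : ℕ) (hn : n ≠ 0) :
    ∃ k m, m ≠ 0 ∧ n = p ^ k * m ∧ ¬ p ∣ m ∧ m ∣ n ∧
      n.divisors.card = (k + 1) * m.divisors.card := by
  refine ⟨n.factorization p, n / p ^ n.factorization p, ?_, ?_, ?_, ?_, ?_⟩
  · exact (Nat.ordCompl_pos p hn).ne'
  · exact (Nat.ordProj_mul_ordCompl_eq_self n p).symm
  · exact Nat.not_dvd_ordCompl pp hn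
  · exact Nat.ordCompl_dvd n p
  · conv_lhs => rw [← Nat.ordProj_mul_ordCompl_eq_self n p]
    rw [Nat.Coprime.card_divisors_mul, card_div_pp12 pp]
    exact (Nat.coprime_ordCompl pp hn).pow_left _

private lemma minFac_ge12 (r : ℕ) (h1 : r ≠ 1) (h2 : ¬2∣r) (h3 : ¬3∣r) (h5 : ¬5∣r) (h7 : ¬7∣r) :
    11 ≤ r.minFac := by
  have pp : r.minFac.Prime := Nat.minFac_prime h1
  have hd : r.minFac ∣ r := Nat.minFac_dvd r
  by_contra hlt
  push_neg at hlt
  have h2le := pp.two_le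
  interval_cases h : r.minFac <;> simp_all <;> revert pp <;> norm_num [h]

/-- d(r)^3 ≤ r for r coprime to 210. -/
private lemma L0twelve : ∀ r : ℕ, ¬2∣r → ¬3∣r → ¬5∣r → ¬7∣r →
    (r.divisors.card)^3 ≤ r := by
  intro r
  induction r using Nat.strong_induction_on with
  | _ r ih =>
    intro h2 h3 h5 h7
    have h0 : r ≠ 0 := by rintro rfl; exact h2 ⟨0, rfl⟩
    by_cases h1 : r = 1
    · subst h1; simp
    have pp : r.minFac.Prime := Nat.minFac_prime h1
    have hp11 : 11 ≤ r.minFac := minFac_ge12 r h1 h2 h3 h5 h7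
    obtain ⟨k, m, hm0, heq, hpm, hmdvd, hd⟩ := peel12 r.minFac pp r h0
    have hk1 : 1 ≤ k := by
      rcases Nat.eq_zero_or_pos k with rfl | h
      · have hrm : r = m := by simpa using heq
        exact absurd ((Nat.minFac_dvd r).trans (dvd_of_eq hrm)) hpm
      · exact h
    have hmlt : m < r := by
      have h2le : 2 ≤ r.minFac ^ k := by
        calc 2 ≤ r.minFac := by omega
          _ = r.minFac ^ 1 := (pow_one _).symm
          _ ≤ r.minFac ^ k := Nat.pow_le_pow_right (by omega) hk1
      calc m < 2 * m := by omega
        _ ≤ r.minFac ^ k * m := Nat.mul_le_mul_right _ h2le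
        _ = r := heq.symm
    have ihm : (m.divisors.card)^3 ≤ m :=
      ih m hmlt (fun h => h2 (h.trans hmdvd)) (fun h => h3 (h.trans hmdvd))
        (fun h => h5 (h.trans hmdvd)) (fun h => h7 (h.trans hmdvd))
    calc (r.divisors.card)^3 = (k+1)^3 * (m.divisors.card)^3 := by rw [hd]; ring
      _ ≤ r.minFac ^ k * m := Nat.mul_le_mul (Jp1 _ hp11 _ hk1) ihm
      _ = r := heq.symm

/-- 2 d(r)^3 ≤ r for r coprime to 210, r ∉ {1, 11, 13}. -/
private lemma Lr12 : ∀ r : ℕ, ¬2∣r → ¬3∣r → ¬5∣r → ¬7∣r → r ≠ 1 → r ≠ 11 → r ≠ 13 →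
    2 * (r.divisors.card)^3 ≤ r := by
  intro r
  induction r using Nat.strong_induction_on with
  | _ r ih =>
    intro h2 h3 h5 h7 h1 h11 h13
    have h0 : r ≠ 0 := by rintro rfl; exact h2 ⟨0, rfl⟩
    have pp : r.minFac.Prime := Nat.minFac_prime h1
    have hp11 : 11 ≤ r.minFac := minFac_ge12 r h1 h2 h3 h5 h7
    obtain ⟨k, m, hm0, heq, hpm, hmdvd, hd⟩ := peel12 r.minFac pp r h0
    have hk1 : 1 ≤ k := by
      rcases Nat.eq_zero_or_pos k with rfl | h
      · have hrm : r = m := by simpa using heq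
        exact absurd ((Nat.minFac_dvd r).trans (dvd_of_eq hrm)) hpm
      · exact h
    have hm2 : ¬2∣m := fun h => h2 (h.trans hmdvd)
    have hm3 : ¬3∣m := fun h => h3 (h.trans hmdvd)
    have hm5 : ¬5∣m := fun h => h5 (h.trans hmdvd)
    have hm7 : ¬7∣m := fun h => h7 (h.trans hmdvd)
    have ihm0 : (m.divisors.card)^3 ≤ m := L0twelve m hm2 hm3 hm5 hm7
    have hmlt : m < r := by
      have h2le : 2 ≤ r.minFac ^ k := by
        calc 2 ≤ r.minFac := by omega
          _ = r.minFac ^ 1 := (pow_one _).symm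
          _ ≤ r.minFac ^ k := Nat.pow_le_pow_right (by omega) hk1
      calc m < 2 * m := by omega
        _ ≤ r.minFac ^ k * m := Nat.mul_le_mul_right _ h2le
        _ = r := heq.symm
    rcases Nat.lt_or_ge r.minFac 17 with hsmall | hbig
    · -- minFac is 11 or 13
      have hp : r.minFac = 11 ∨ r.minFac = 13 := by
        have hd' : r.minFac ∣ r := Nat.minFac_dvd r
        interval_cases h : r.minFac <;> simp_all <;> revert pp <;> norm_num [h]
      rcases Nat.lt_or_ge k 2 with hk2 | hk2
      · -- k = 1
        have hk : k = 1 := by omega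
        subst hk
        by_cases hm1 : m = 1
        · exfalso
          rcases hp with hp | hp <;> simp [hm1, hp] at heq <;> omega
        by_cases hm11 : m = 11
        · exfalso
          rcases hp with hp | hp
          · exact hpm (by rw [hp, hm11])
          · have : (11:ℕ) ∣ r := hm11 ▸ hmdvd
            have := Nat.minFac_le_of_dvd (by norm_num) this
            omega
        by_cases hm13 : m = 13
        · -- r = 11 * 13 = 143 (p = 13 impossible since then 13 ∣ m)
          rcases hp with hp | hp
          · subst hm13
            have hdm : (13:ℕ).divisors.card = 2 := by decide
            rw [hp] at heq
            norm_num at heq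
            rw [hd, hdm, heq]
            norm_num
          · exact absurd (by rw [hp, hm13]) hpm
        · have ihm : 2 * (m.divisors.card)^3 ≤ m :=
            ih m hmlt hm2 hm3 hm5 hm7 hm1 hm11 hm13
          calc 2 * (r.divisors.card)^3 = 8 * (2 * (m.divisors.card)^3) := by
                rw [hd]; ring
            _ ≤ 8 * m := Nat.mul_le_mul_left _ ihm
            _ ≤ r.minFac ^ 1 * m := Nat.mul_le_mul_right _ (by rw [pow_one]; omega)
            _ = r := heq.symm
      · calc 2 * (r.divisors.card)^3 = (2*(k+1)^3) * (m.divisors.card)^3 := by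
              rw [hd]; ring
          _ ≤ r.minFac ^ k * m := Nat.mul_le_mul (Jp2 _ hp11 _ hk2) ihm0
          _ = r := heq.symm
    · calc 2 * (r.divisors.card)^3 = (2*(k+1)^3) * (m.divisors.card)^3 := by
            rw [hd]; ring
        _ ≤ r.minFac ^ k * m := Nat.mul_le_mul (Jp17 _ hbig _ hk1) ihm0
        _ = r := heq.symm

private lemma combine12 {a b c e dr r A2 C2 A3 C3 C5 C7 Ar : ℕ}
    (hpos : 0 < A2*A3*Ar)
    (h2 : A2*(a+1)^3 ≤ C2*2^a) (h3 : A3*(b+1)^3 ≤ C3*3^b)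
    (h5 : 5*(c+1)^3 ≤ C5*5^c) (h7 : 7*(e+1)^3 ≤ C7*7^e) (hr : Ar*dr^3 ≤ r)
    (hK : C2*C3*(C5*C7) ≤ 768*(A2*A3*Ar)) :
    35 * ((a+1)*(b+1)*(c+1)*(e+1)*dr)^3 ≤ 768 * (2^a*(3^b*(5^c*(7^e*r)))) := by
  have hm := Nat.mul_le_mul (Nat.mul_le_mul (Nat.mul_le_mul (Nat.mul_le_mul h2 h3) h5) h7) hr
  refine Nat.le_of_mul_le_mul_left ?_ hpos
  calc (A2*A3*Ar) * (35 * ((a+1)*(b+1)*(c+1)*(e+1)*dr)^3)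
      = (A2*(a+1)^3) * (A3*(b+1)^3) * (5*(c+1)^3) * (7*(e+1)^3) * (Ar*dr^3) := by ring
    _ ≤ (C2*2^a) * (C3*3^b) * (C5*5^c) * (C7*7^e) * r := hm
    _ = (C2*C3*(C5*C7)) * (2^a*(3^b*(5^c*(7^e*r)))) := by ring
    _ ≤ (768*(A2*A3*Ar)) * (2^a*(3^b*(5^c*(7^e*r)))) := Nat.mul_le_mul_right _ hK
    _ = (A2*A3*Ar) * (768 * (2^a*(3^b*(5^c*(7^e*r))))) := by ring

/-- main natural-number dichotomy -/
private lemma Nmain12 : ∀ n : ℕ, 0 < n →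
    35 * (n.divisors.card)^3 ≤ 768 * n ∨
    ∃ a b c e m : ℕ, 1 ≤ a ∧ a ≤ 6 ∧ b ≤ 4 ∧ c ≤ 2 ∧ e ≤ 1 ∧
      (m = 1 ∨ m = 11 ∨ m = 13) ∧ n = 2 ^ a * 3 ^ b * 5 ^ c * 7 ^ e * m := by
  intro n hn
  obtain ⟨a, m1, hm10, heq1, h2m1, _, hd1⟩ := peel12 2 Nat.prime_two n hn.ne'
  obtain ⟨b, m2, hm20, heq2, h3m2, hdvd2, hd2⟩ := peel12 3 Nat.prime_three m1 hm10
  obtain ⟨c, m3, hm30, heq3, h5m3, hdvd3, hd3⟩ := peel12 5 (by norm_num) m2 hm20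
  obtain ⟨e, r, hr0, heq4, h7r, hdvd4, hd4⟩ := peel12 7 (by norm_num) m3 hm30
  have hrdvd1 : r ∣ m1 := (hdvd4.trans hdvd3).trans hdvd2
  have h2r : ¬2∣r := fun h => h2m1 (h.trans hrdvd1)
  have h3r : ¬3∣r := fun h => h3m2 (h.trans (hdvd4.trans hdvd3))
  have h5r : ¬5∣r := fun h => h5m3 (h.trans hdvd4)
  have hneq : n = 2^a*(3^b*(5^c*(7^e*r))) := by rw [heq1, heq2, heq3, heq4]
  have hdn : n.divisors.card = (a+1)*(b+1)*(c+1)*(e+1)*r.divisors.card := by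
    rw [hd1, hd2, hd3, hd4]; ring
  have hL0 : 1 * (r.divisors.card)^3 ≤ r := by
    simpa using L0twelve r h2r h3r h5r h7r
  have key : ∀ A2 C2 A3 C3 C5 C7 Ar : ℕ, 0 < A2*A3*Ar →
      A2*(a+1)^3 ≤ C2*2^a → A3*(b+1)^3 ≤ C3*3^b → 5*(c+1)^3 ≤ C5*5^c →
      7*(e+1)^3 ≤ C7*7^e → Ar*(r.divisors.card)^3 ≤ r →
      C2*C3*(C5*C7) ≤ 768*(A2*A3*Ar) →
      35 * (n.divisors.card)^3 ≤ 768 * n := by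
    intro A2 C2 A3 C3 C5 C7 Ar hpos i2 i3 i5 i7 ir iK
    rw [hdn, hneq]
    exact combine12 hpos i2 i3 i5 i7 ir iK
  by_cases ha0 : a = 0
  · subst ha0
    exact Or.inl <| key 1 1 1 3 8 8 1 (by norm_num) (by norm_num)
      (by simpa using J3 b) (J5 c) (J7 e) hL0 (by norm_num)
  by_cases ha7 : 7 ≤ a
  · exact Or.inl <| key 1 4 1 3 8 8 1 (by norm_num) (by simpa using J2b a ha7)
      (by simpa using J3 b) (J5 c) (J7 e) hL0 (by norm_num)
  by_cases hb5 : 5 ≤ b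
  · exact Or.inl <| key 1 8 2 3 8 8 1 (by norm_num) (by simpa using J2 a)
      (J3b b hb5) (J5 c) (J7 e) hL0 (by norm_num)
  by_cases hc3 : 3 ≤ c
  · exact Or.inl <| key 1 8 1 3 4 8 1 (by norm_num) (by simpa using J2 a)
      (by simpa using J3 b) (J5b c hc3) (J7 e) hL0 (by norm_num)
  by_cases he2 : 2 ≤ e
  · exact Or.inl <| key 1 8 1 3 8 4 1 (by norm_num) (by simpa using J2 a)
      (by simpa using J3 b) (J5 c) (J7b e he2) hL0 (by norm_num)
  by_cases hrset : r = 1 ∨ r = 11 ∨ r = 13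
  · refine Or.inr ⟨a, b, c, e, r, by omega, by omega, by omega, by omega, by omega, hrset, ?_⟩
    rw [hneq]; ring
  · push_neg at hrset
    obtain ⟨hr1, hr11, hr13⟩ := hrset
    have hLr : 2 * (r.divisors.card)^3 ≤ r := Lr12 r h2r h3r h5r h7r hr1 hr11 hr13
    exact Or.inl <| key 1 8 1 3 8 8 2 (by norm_num) (by simpa using J2 a)
      (by simpa using J3 b) (J5 c) (J7 e) hLr (by norm_num)

private lemma conv12 (n : ℕ) (h : 35 * (n.divisors.card)^3 ≤ 768 * n) :
    (n.divisors.card : ℝ) ≤ (768 / 35 : ℝ) ^ ((1 : ℝ) / 3) * (n : ℝ) ^ ((1 : ℝ) / 3) := by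
  set D : ℝ := (n.divisors.card : ℝ) with hD
  have hD0 : 0 ≤ D := Nat.cast_nonneg _
  have h' : D ^ (3:ℕ) ≤ (768/35) * (n:ℝ) := by
    have hc : (35:ℝ) * D^(3:ℕ) ≤ 768 * (n:ℝ) := by rw [hD]; exact_mod_cast h
    linarith
  calc D = (D ^ (3:ℕ)) ^ ((1:ℝ)/3) := by
        rw [← Real.rpow_natCast D 3, ← Real.rpow_mul hD0]
        norm_num
    _ ≤ ((768/35) * (n:ℝ)) ^ ((1:ℝ)/3) := by
        apply Real.rpow_le_rpow (by positivity) h' (by norm_num)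
    _ = (768 / 35 : ℝ) ^ ((1 : ℝ) / 3) * (n : ℝ) ^ ((1 : ℝ) / 3) :=
        Real.mul_rpow (by norm_num) (Nat.cast_nonneg _)

end Aux12

/-- Let `c₀ = (768/35)^(1/3)`. For every positive integer `n`, either
`d(n) ≤ c₀ n^(1/3)`, or `n = 2^a 3^b 5^c 7^e m` with `1 ≤ a ≤ 6`, `b ≤ 4`,
`c ≤ 2`, `e ≤ 1` and `m ∈ {1, 11, 13}`. In particular, if `n > 11793600`
then `d(n) ≤ c₀ n^(1/3)`. -/
theorem stmt12 :
    (∀ n : ℕ, 0 < n →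
      (n.divisors.card : ℝ) ≤ (768 / 35 : ℝ) ^ ((1 : ℝ) / 3) * (n : ℝ) ^ ((1 : ℝ) / 3) ∨
      ∃ a b c e m : ℕ, 1 ≤ a ∧ a ≤ 6 ∧ b ≤ 4 ∧ c ≤ 2 ∧ e ≤ 1 ∧
        m ∈ ({1, 11, 13} : Set ℕ) ∧ n = 2 ^ a * 3 ^ b * 5 ^ c * 7 ^ e * m) ∧
    (∀ n : ℕ, 11793600 < n →
      (n.divisors.card : ℝ) ≤ (768 / 35 : ℝ) ^ ((1 : ℝ) / 3) * (n : ℝ) ^ ((1 : ℝ) / 3)) := by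
  constructor
  · intro n hn
    rcases Nmain12 n hn with h | ⟨a, b, c, e, m, ha1, ha6, hb, hc, he, hm, heq⟩
    · exact Or.inl (conv12 n h)
    · refine Or.inr ⟨a, b, c, e, m, ha1, ha6, hb, hc, he, ?_, heq⟩
      rcases hm with rfl | rfl | rfl <;> simp
  · intro n hn
    rcases Nmain12 n (by omega) with h | ⟨a, b, c, e, m, ha1, ha6, hb, hc, he, hm, heq⟩
    · exact conv12 n h
    · exfalso
      have hm13 : m ≤ 13 := by rcases hm with rfl | rfl | rfl <;> norm_num
      have hle : n ≤ 2^6 * 3^4 * 5^2 * 7^1 * 13 := by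
        rw [heq]
        have h2 : 2^a ≤ 2^6 := Nat.pow_le_pow_right (by norm_num) ha6
        have h3 : 3^b ≤ 3^4 := Nat.pow_le_pow_right (by norm_num) hb
        have h5 : 5^c ≤ 5^2 := Nat.pow_le_pow_right (by norm_num) hc
        have h7 : 7^e ≤ 7^1 := Nat.pow_le_pow_right (by norm_num) he
        exact Nat.mul_le_mul (Nat.mul_le_mul (Nat.mul_le_mul (Nat.mul_le_mul h2 h3) h5) h7) hm13
      norm_num at hle
      omega
end

section
/- Let n, a, b be positive integers with a ≤ b ≤ n, and let D be the set of all positive divisors d of n with a ≤ d ≤ b. Then ∑_{d ∈ D} (d − 1)(d − 2) ≤ (b − 1)(b − 2) + n·b − n·a. -/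
private lemma gap_lemma (n M M' : ℕ) (hn : 0 < n) (hM : M ∣ n) (hM' : M' ∣ n)
    (hlt : M' < M) (hpos : 0 < M') :
    ((M' : ℤ) - 1) * ((M' : ℤ) - 2) + (n : ℤ) * M' ≤ (n : ℤ) * M := by
  obtain ⟨q, hq⟩ := hM
  obtain ⟨q', hq'⟩ := hM'
  have hMpos : 0 < M := hpos.trans hlt
  have hqpos : 0 < q := by
    rcases Nat.eq_zero_or_pos q with h | h
    · subst h; simp at hq; omega
    · exact h
  have hqq : q < q' := by
    have h1 : M * q = M' * q' := by omega
    nlinarith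
  have e1 : (n : ℤ) = (M : ℤ) * q := by exact_mod_cast hq
  have e2 : (n : ℤ) = (M' : ℤ) * q' := by exact_mod_cast hq'
  have hqq' : (q : ℤ) + 1 ≤ (q' : ℤ) := by exact_mod_cast hqq
  have hMi : (1 : ℤ) ≤ (M : ℤ) := by exact_mod_cast hMpos
  have hM'i : (1 : ℤ) ≤ (M' : ℤ) := by exact_mod_cast hpos
  have h3 : (n : ℤ) * M - (n : ℤ) * M' ≥ (M : ℤ) * M' := by
    have hnn : (0 : ℤ) ≤ (M : ℤ) * M' * ((q' : ℤ) - q - 1) := by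
      apply mul_nonneg
      · positivity
      · linarith
    nlinarith [e1, e2]
  have h4 : ((M' : ℤ) - 1) * ((M' : ℤ) - 2) ≤ (M : ℤ) * M' := by
    have hM1 : (M' : ℤ) + 1 ≤ M := by exact_mod_cast hlt
    have hM0 : (1 : ℤ) ≤ M' := by exact_mod_cast hpos
    nlinarith
  linarith

private lemma key_lemma (n : ℕ) (hn : 0 < n) : ∀ b a : ℕ, 0 < a →
    ∀ h : (n.divisors.filter (fun d => a ≤ d ∧ d ≤ b)).Nonempty,
    ∑ d ∈ n.divisors.filter (fun d => a ≤ d ∧ d ≤ b), ((d : ℤ) - 1) * ((d : ℤ) - 2)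
      ≤ ((((n.divisors.filter (fun d => a ≤ d ∧ d ≤ b)).max' h : ℕ) : ℤ) - 1) *
          ((((n.divisors.filter (fun d => a ≤ d ∧ d ≤ b)).max' h : ℕ) : ℤ) - 2)
        + (n : ℤ) * ((n.divisors.filter (fun d => a ≤ d ∧ d ≤ b)).max' h : ℕ)
        - (n : ℤ) * a := by
  intro b
  induction b using Nat.strong_induction_on with
  | _ b ih =>
    intro a ha h
    set D := n.divisors.filter (fun d => a ≤ d ∧ d ≤ b) with hD
    set M := D.max' h with hMdef
    have hMmem : M ∈ D := Finset.max'_mem _ _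
    rw [hD, Finset.mem_filter, Nat.mem_divisors] at hMmem
    obtain ⟨⟨hMdvd, _⟩, haM, hMb⟩ := hMmem
    have hMpos : 0 < M := lt_of_lt_of_le ha haM
    set E := n.divisors.filter (fun d => a ≤ d ∧ d ≤ M - 1) with hE
    have hsplit : D = insert M E := by
      ext d
      simp only [hD, hE, Finset.mem_insert, Finset.mem_filter, Nat.mem_divisors]
      constructor
      · rintro ⟨hd, had, hdb⟩
        by_cases hdM : d = M
        · exact Or.inl hdM
        · refine Or.inr ⟨hd, had, ?_⟩
          have : d ≤ M := Finset.le_max' D d (by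
            rw [hD, Finset.mem_filter, Nat.mem_divisors]; exact ⟨hd, had, hdb⟩)
          omega
      · rintro (rfl | ⟨hd, had, hdm⟩)
        · exact ⟨⟨hMdvd, hn.ne'⟩, haM, hMb⟩
        · exact ⟨hd, had, by omega⟩
    have hMnotE : M ∉ E := by
      rw [hE, Finset.mem_filter]
      push_neg
      intro _ _
      omega
    rw [← hD, hsplit, Finset.sum_insert hMnotE]
    rcases Finset.eq_empty_or_nonempty E with hEe | hEne
    · rw [hEe, Finset.sum_empty]
      have : (a : ℤ) ≤ M := by exact_mod_cast haM
      have hn' : (0 : ℤ) < n := by exact_mod_cast hn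
      nlinarith
    · set M' := E.max' hEne with hM'def
      have hM'mem : M' ∈ E := Finset.max'_mem _ _
      rw [hE, Finset.mem_filter, Nat.mem_divisors] at hM'mem
      obtain ⟨⟨hM'dvd, _⟩, haM', hM'M⟩ := hM'mem
      have hM'pos : 0 < M' := lt_of_lt_of_le ha haM'
      have hlt : M' < M := by omega
      have hblt : M - 1 < b := by omega
      have := ih (M - 1) hblt a ha hEne
      have hgap := gap_lemma n M M' hn hMdvd hM'dvd hlt hM'pos
      have hM'cast : (((n.divisors.filter (fun d => a ≤ d ∧ d ≤ M - 1)).max' hEne : ℕ) : ℤ)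
          = (M' : ℤ) := by rw [← hM'def]
      rw [hM'cast] at this
      linarith

/-- For positive integers `a ≤ b ≤ n`, if `D` is the set of divisors `d` of `n`
with `a ≤ d ≤ b`, then `∑_{d ∈ D} (d-1)(d-2) ≤ (b-1)(b-2) + n·b - n·a`. -/
theorem stmt13 (n a b : ℕ) (ha : 0 < a) (hab : a ≤ b) (hbn : b ≤ n) :
    ∑ d ∈ n.divisors.filter (fun d => a ≤ d ∧ d ≤ b), ((d : ℤ) - 1) * ((d : ℤ) - 2)
      ≤ ((b : ℤ) - 1) * ((b : ℤ) - 2) + (n : ℤ) * b - (n : ℤ) * a := by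
  have hn : 0 < n := lt_of_lt_of_le (lt_of_lt_of_le ha hab) hbn
  have hb1 : (1 : ℤ) ≤ b := by exact_mod_cast (ha.trans_le hab)
  have hab' : (a : ℤ) ≤ b := by exact_mod_cast hab
  have hn' : (0 : ℤ) < n := by exact_mod_cast hn
  rcases Finset.eq_empty_or_nonempty (n.divisors.filter (fun d => a ≤ d ∧ d ≤ b)) with he | hne
  · rw [he, Finset.sum_empty]
    have hbb : (0 : ℤ) ≤ ((b : ℤ) - 1) * ((b : ℤ) - 2) := by
      have : b = 1 ∨ 2 ≤ b := by omega
      rcases this with rfl | h2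
      · norm_num
      · have : (2 : ℤ) ≤ (b : ℤ) := by exact_mod_cast h2
        nlinarith
    nlinarith
  · have hkey := key_lemma n hn b a ha hne
    set M := (n.divisors.filter (fun d => a ≤ d ∧ d ≤ b)).max' hne with hMdef
    have hMmem : M ∈ _ := Finset.max'_mem _ hne
    rw [Finset.mem_filter] at hMmem
    obtain ⟨_, haM, hMb⟩ := hMmem
    have hMb' : (M : ℤ) ≤ b := by exact_mod_cast hMb
    have hM1 : (1 : ℤ) ≤ M := by exact_mod_cast (ha.trans_le haM)
    have hmono : ((M : ℤ) - 1) * ((M : ℤ) - 2) + (n : ℤ) * M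
        ≤ ((b : ℤ) - 1) * ((b : ℤ) - 2) + (n : ℤ) * b := by
      nlinarith
    linarith
end

section
/- Let n and m be positive integers with m ≥ n − 1. Then n · P(n,m) = ∑_{d | m, 1 ≤ d ≤ n} P(n − d, m), where the sum is over positive divisors d of m with d ≤ n. Equivalently, the number of elements g ∈ S_n with g^m = 1 equals ∑_{d | m, 1 ≤ d ≤ n} ((n−1)!/(n−d)!) · N(n−d, m), where N(k,m) is the number of elements h ∈ S_k with h^m = 1 (and N(0,m) = 1). -/
/-!
Count the pairs `(x, g)` with `g ^ m = 1` in two ways. If the cycle of `g` through `x` has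
length `d`, then `d ∣ m` and `d ≤ n`, and the pair amounts to the injective sequence
`x, g x, …, g^(d-1) x` (there are `n! / (n-d)!` of them) together with a permutation of the
remaining `n - d` points whose `m`-th power is `1`. Dividing by `n!` gives the identity.
-/

/-- P(n,m): the proportion of elements of the symmetric group `S_n`
with `g ^ m = 1` (for `n = 0` this equals `1`, matching the convention
`P(r,m) = 1` for `r ≤ 0`). -/
noncomputable def P (n m : ℕ) : ℝ :=
  (Nat.card {g : Equiv.Perm (Fin n) // g ^ m = 1} : ℝ) / (Nat.factorial n)

open Function Fin.NatCast

namespace Equiv.Perm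

variable {α β : Type*}

section finRotate

variable {d : ℕ} [NeZero d]

lemma finRotate_pow_apply (j : ℕ) (i : Fin d) : (finRotate d ^ j) i = i + j := by
  induction j with
  | zero => simp
  | succ j ih => rw [pow_succ', mul_apply, ih, finRotate_apply]; push_cast; rw [add_assoc]

lemma finRotate_pow_eq_one_of_dvd {m : ℕ} (hd : d ∣ m) : finRotate d ^ m = 1 := by
  ext i
  simp [finRotate_pow_apply, (Fin.natCast_eq_zero).mpr hd]

end finRotate

section cycleAlong

open scoped Classical

variable {d : ℕ} (f : Fin d ↪ α)

noncomputable def cycleAlong : Perm α :=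
  (finRotate d).extendDomain f.toEquivRange

noncomputable def insertCycle (h : Perm {y // y ∉ Set.range f}) : Perm α :=
  cycleAlong f * ofSubtype h

lemma cycleAlong_apply_of_notMem {y : α} (hy : y ∉ Set.range f) : cycleAlong f y = y :=
  extendDomain_apply_not_subtype _ _ hy

lemma insertCycle_apply_of_notMem (h : Perm {y // y ∉ Set.range f}) {y : α}
    (hy : y ∉ Set.range f) : insertCycle f h y = h ⟨y, hy⟩ := by
  rw [insertCycle, mul_apply, ofSubtype_apply_of_mem h hy,
    cycleAlong_apply_of_notMem f (h ⟨y, hy⟩).2]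

variable [NeZero d]

lemma cycleAlong_apply_apply (i : Fin d) : cycleAlong f (f i) = f (i + 1) := by
  simpa [cycleAlong, finRotate_apply] using extendDomain_apply_image (finRotate d) f.toEquivRange i

lemma cycleAlong_pow_eq_one {m : ℕ} (hd : d ∣ m) : cycleAlong f ^ m = 1 := by
  rw [cycleAlong, ← extendDomain_pow, finRotate_pow_eq_one_of_dvd hd, extendDomain_one]

lemma commute_cycleAlong_ofSubtype (h : Perm {y // y ∉ Set.range f}) :
    Commute (cycleAlong f) (ofSubtype h) := by
  ext y
  by_cases hy : y ∈ Set.range f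
  · obtain ⟨i, rfl⟩ := hy
    simp only [mul_apply, ofSubtype_apply_of_not_mem h (not_not.mpr (Set.mem_range_self _)),
      cycleAlong_apply_apply]
  · simp only [mul_apply, cycleAlong_apply_of_notMem f hy, ofSubtype_apply_of_mem h hy,
      cycleAlong_apply_of_notMem f (h ⟨y, hy⟩).2]

variable (h : Perm {y // y ∉ Set.range f})

lemma insertCycle_apply_apply (i : Fin d) : insertCycle f h (f i) = f (i + 1) := by
  rw [insertCycle, mul_apply, ofSubtype_apply_of_not_mem h (not_not.mpr (Set.mem_range_self _)),
    cycleAlong_apply_apply]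

lemma insertCycle_pow_apply_zero (j : ℕ) : (insertCycle f h ^ j) (f 0) = f j := by
  induction j with
  | zero => simp
  | succ j ih => rw [pow_succ', mul_apply, ih, insertCycle_apply_apply]; push_cast; rfl

lemma minimalPeriod_insertCycle : minimalPeriod (insertCycle f h) (f 0) = d := by
  refine Nat.dvd_right_iff_eq.mp fun j => ?_
  rw [← isPeriodicPt_iff_minimalPeriod_dvd, IsPeriodicPt, IsFixedPt, ← coe_pow,
    insertCycle_pow_apply_zero, f.injective.eq_iff, Fin.natCast_eq_zero]

lemma insertCycle_pow_eq_one {m : ℕ} (hd : d ∣ m) (hh : h ^ m = 1) :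
    insertCycle f h ^ m = 1 := by
  rw [insertCycle, (commute_cycleAlong_ofSubtype f h).mul_pow, cycleAlong_pow_eq_one f hd,
    ← map_pow, hh, map_one, one_mul]

end cycleAlong

section orbit

variable (g : Perm α) (x : α) {d : ℕ} (hx : minimalPeriod g x = d)

def orbitEmbedding : Fin d ↪ α where
  toFun i := (g ^ (i : ℕ)) x
  inj' i j hij := Fin.ext <| by
    have hinj := iterate_injOn_Iio_minimalPeriod (f := g) (x := x)
    rw [hx] at hinj
    exact hinj i.isLt j.isLt (by simpa only [coe_pow] using hij)

variable [NeZero d]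

lemma pow_apply_eq_orbitEmbedding (j : ℕ) : (g ^ j) x = orbitEmbedding g x hx j := by
  simp only [orbitEmbedding, Embedding.coeFn_mk, Fin.val_natCast, coe_pow, ← hx,
    iterate_mod_minimalPeriod_eq]

lemma apply_orbitEmbedding (i : Fin d) :
    g (orbitEmbedding g x hx i) = orbitEmbedding g x hx (i + 1) := by
  have := pow_apply_eq_orbitEmbedding g x hx (i + 1)
  rwa [pow_succ', mul_apply, Nat.cast_add, Fin.cast_val_eq_self, Nat.cast_one] at this

lemma apply_notMem_range_orbitEmbedding (y : α) (hy : y ∉ Set.range (orbitEmbedding g x hx)) :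
    g y ∉ Set.range (orbitEmbedding g x hx) := by
  rintro ⟨i, hi⟩
  refine hy ⟨i - 1, g.injective ?_⟩
  rw [apply_orbitEmbedding, sub_add_cancel, hi]

variable [Finite α]

def restrictComplOrbit : Perm {y // y ∉ Set.range (orbitEmbedding g x hx)} :=
  subtypePermOfFintype g (apply_notMem_range_orbitEmbedding g x hx)

lemma insertCycle_orbitEmbedding :
    insertCycle (orbitEmbedding g x hx) (restrictComplOrbit g x hx) = g := by
  ext y
  by_cases hy : y ∈ Set.range (orbitEmbedding g x hx)
  · obtain ⟨i, rfl⟩ := hy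
    rw [insertCycle_apply_apply, apply_orbitEmbedding]
  · rw [insertCycle_apply_of_notMem _ _ hy]
    rfl

lemma restrictComplOrbit_pow_eq_one {m : ℕ} (hg : g ^ m = 1) :
    restrictComplOrbit g x hx ^ m = 1 := by
  ext y
  simp [restrictComplOrbit, subtypePerm_pow, hg]

end orbit

section bijection

variable {d : ℕ}

lemma insertCycle_injective (f : Fin d ↪ α) : Injective (insertCycle f) := fun h h' he ↦ by
  ext y
  simpa only [insertCycle_apply_of_notMem f _ y.2] using congrArg (· y.1) he

variable [NeZero d]

lemma eq_of_insertCycle_eq {f f' : Fin d ↪ α} {h : Perm {y // y ∉ Set.range f}}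
    {h' : Perm {y // y ∉ Set.range f'}} (h0 : f 0 = f' 0)
    (he : insertCycle f h = insertCycle f' h') : f = f' := by
  ext i
  rw [← Fin.cast_val_eq_self i, ← insertCycle_pow_apply_zero, ← insertCycle_pow_apply_zero,
    h0, he]

theorem bijective_insertCycle [Finite α] {m : ℕ} (hd : d ∣ m) :
    Bijective (fun s : Σ f : Fin d ↪ α, {h : Perm {y // y ∉ Set.range f} // h ^ m = 1} ↦
      (⟨(s.1 0, insertCycle s.1 s.2), insertCycle_pow_eq_one s.1 s.2 hd s.2.2,
        minimalPeriod_insertCycle s.1 s.2⟩ :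
        {p : α × Perm α // p.2 ^ m = 1 ∧ minimalPeriod p.2 p.1 = d})) := by
  refine ⟨?_, ?_⟩
  · rintro ⟨f, h, _⟩ ⟨f', h', _⟩ he
    simp only [Subtype.mk.injEq, Prod.mk.injEq] at he
    obtain rfl := eq_of_insertCycle_eq he.1 he.2
    obtain rfl := insertCycle_injective f he.2
    rfl
  · rintro ⟨⟨x, g⟩, hg, hx⟩
    exact ⟨⟨orbitEmbedding g x hx, restrictComplOrbit g x hx,
        restrictComplOrbit_pow_eq_one g x hx hg⟩,
      Subtype.ext (Prod.ext rfl (insertCycle_orbitEmbedding g x hx))⟩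

end bijection

lemma card_pow_eq_one_congr (e : α ≃ β) (m : ℕ) :
    Nat.card {g : Perm α // g ^ m = 1} = Nat.card {g : Perm β // g ^ m = 1} :=
  Nat.card_congr <| e.permCongrHom.toEquiv.subtypeEquiv fun g ↦ by
    rw [MulEquiv.toEquiv_eq_coe, MulEquiv.coe_toEquiv, ← map_pow, MulEquiv.map_eq_one_iff]

theorem card_pow_eq_one_and_minimalPeriod_eq [Fintype α] {d m : ℕ} [NeZero d] (hd : d ∣ m) :
    Nat.card {p : α × Perm α // p.2 ^ m = 1 ∧ minimalPeriod p.2 p.1 = d} =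
      (Fintype.card α).descFactorial d *
        Nat.card {h : Perm (Fin (Fintype.card α - d)) // h ^ m = 1} := by
  classical
  have hfiber (f : Fin d ↪ α) : Nat.card {h : Perm {y // y ∉ Set.range f} // h ^ m = 1} =
      Nat.card {h : Perm (Fin (Fintype.card α - d)) // h ^ m = 1} :=
    card_pow_eq_one_congr (Fintype.equivFinOfCardEq (by
      rw [Fintype.card_subtype_compl, Fintype.card_range, Fintype.card_fin])) m
  rw [← Nat.card_eq_of_bijective _ (bijective_insertCycle hd), Nat.card_sigma]
  simp only [hfiber, Finset.sum_const, Finset.card_univ, Fintype.card_embedding_eq,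
    Fintype.card_fin, smul_eq_mul]

theorem card_mul_card_pow_eq_one [Fintype α] {m : ℕ} (hm : 0 < m) :
    Fintype.card α * Nat.card {g : Perm α // g ^ m = 1} =
      ∑ d ∈ m.divisors.filter (· ≤ Fintype.card α), (Fintype.card α).descFactorial d *
        Nat.card {h : Perm (Fin (Fintype.card α - d)) // h ^ m = 1} := by
  classical
  have hpairs : Nat.card {p : α × Perm α // p.2 ^ m = 1} =
      Fintype.card α * Nat.card {g : Perm α // g ^ m = 1} := by
    rw [← Nat.card_eq_fintype_card, ← Nat.card_prod]
    exact Nat.card_congr ⟨fun p ↦ (p.1.1, ⟨p.1.2, p.2⟩), fun q ↦ ⟨(q.1, q.2), q.2.2⟩,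
      fun _ ↦ rfl, fun _ ↦ rfl⟩
  have hmaps : ∀ p : α × Perm α, p.2 ^ m = 1 →
      minimalPeriod p.2 p.1 ∈ m.divisors.filter (· ≤ Fintype.card α) := fun p hp ↦ by
    refine Finset.mem_filter.mpr ⟨Nat.mem_divisors.mpr ⟨?_, hm.ne'⟩, minimalPeriod_le_card⟩
    rw [← isPeriodicPt_iff_minimalPeriod_dvd, IsPeriodicPt, IsFixedPt, ← coe_pow, hp, one_apply]
  rw [← hpairs, Nat.card_eq_fintype_card, Fintype.card_subtype,
    Finset.card_eq_sum_card_fiberwise fun p hp ↦ hmaps p (Finset.mem_filter.mp hp).2]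
  refine Finset.sum_congr rfl fun d hd ↦ ?_
  have hdm : d ∣ m := Nat.dvd_of_mem_divisors (Finset.mem_filter.mp hd).1
  have : NeZero d := ⟨ne_zero_of_dvd_ne_zero hm.ne' hdm⟩
  rw [← card_pow_eq_one_and_minimalPeriod_eq hdm, Nat.card_eq_fintype_card,
    Fintype.card_subtype, Finset.filter_filter]

end Equiv.Perm

lemma P_sub_eq_descFactorial_mul_card_div {n d : ℕ} (m : ℕ) (hd : d ≤ n) :
    P (n - d) m = (n.descFactorial d * Nat.card {g : Equiv.Perm (Fin (n - d)) // g ^ m = 1} : ℕ)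
      / (n.factorial : ℝ) := by
  rw [P, ← Nat.factorial_mul_descFactorial hd]
  push_cast
  have : (n.descFactorial d : ℝ) ≠ 0 := by
    exact_mod_cast (Nat.descFactorial_pos.mpr hd).ne'
  field_simp

theorem stmt14_general (n m : ℕ) (hm : 0 < m) :
    (n : ℝ) * P n m = ∑ d ∈ m.divisors.filter (fun d => d ≤ n), P (n - d) m := by
  have hcount := Equiv.Perm.card_mul_card_pow_eq_one (α := Fin n) hm
  rw [Fintype.card_fin] at hcount
  rw [P, ← mul_div_assoc, ← Nat.cast_mul, hcount, Nat.cast_sum, Finset.sum_div]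
  exact Finset.sum_congr rfl fun d hd ↦
    (P_sub_eq_descFactorial_mul_card_div m (Finset.mem_filter.mp hd).2).symm

/-- For positive integers `n, m` with `m ≥ n - 1`:
`n · P(n,m) = ∑_{d ∣ m, d ≤ n} P(n-d, m)`. -/
theorem stmt14 (n m : ℕ) (hn : 0 < n) (hm : 0 < m) (h : n - 1 ≤ m) :
    (n : ℝ) * P n m = ∑ d ∈ m.divisors.filter (fun d => d ≤ n), P (n - d) m :=
  stmt14_general n m hm
end
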